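/- In the automaton group of automaton 887, the element bc satisfies bc(1) = 1 and (bc)|_1 = ca; consequently (bc)^n(1^∞) = 1·(ca)^n(1^∞) for all n ≥ 1, and since (ca)^n(1^∞) ≠ 1^∞ for all n ≥ 1, the element bc has infinite order. -/

import Mathlib

namespace Stmt13


/-- A Mealy automaton over the binary alphabet with state set `S`. -/
structure Mealy (S : Type) where
  /-- transition function -/
  δ : S → Bool → S
  /-- output function -/
  τ : S → Bool → Bool

namespace Mealy

variable {S : Type} (M : Mealy S)

/-- The state reached from `q` after reading the first `n` letters of `w`. -/
def stateAt (q : S) (w : ℕ → Bool) : ℕ → S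
  | 0 => q
  | n + 1 => M.δ (stateAt q w n) (w n)

/-- The action of state `q` on infinite words. -/
def act (q : S) (w : ℕ → Bool) : ℕ → Bool :=
  fun n => M.τ (M.stateAt q w n) (w n)

/-- The inverse automaton (for automata whose output functions are involutions). -/
def inv : Mealy S := ⟨fun q b => M.δ q (M.τ q b), M.τ⟩

theorem stateAt_inv_act (h : ∀ q b, M.τ q (M.τ q b) = b) (q : S) (w : ℕ → Bool) :
    ∀ n, M.inv.stateAt q (M.act q w) n = M.stateAt q w n := by
  intro n
  induction n with
  | zero => rfl
  | succ n ih =>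
    show M.inv.δ (M.inv.stateAt q (M.act q w) n) (M.act q w n) = M.δ (M.stateAt q w n) (w n)
    rw [ih]
    show M.δ (M.stateAt q w n) (M.τ (M.stateAt q w n) (M.τ (M.stateAt q w n) (w n))) = _
    rw [h]

theorem inv_act (h : ∀ q b, M.τ q (M.τ q b) = b) (q : S) (w : ℕ → Bool) :
    M.inv.act q (M.act q w) = w := by
  funext n
  show M.inv.τ (M.inv.stateAt q (M.act q w) n) (M.act q w n) = w n
  rw [stateAt_inv_act M h]
  show M.τ (M.stateAt q w n) (M.τ (M.stateAt q w n) (w n)) = w n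
  rw [h]

theorem inv_inv (h : ∀ q b, M.τ q (M.τ q b) = b) : M.inv.inv = M := by
  obtain ⟨d, t⟩ := M
  simp only [inv]
  congr 1
  funext q b
  exact congrArg (d q) (h q b)

/-- The permutation of the set of infinite binary words defined by state `q`. -/
def perm (h : ∀ q b, M.τ q (M.τ q b) = b) (q : S) : Equiv.Perm (ℕ → Bool) where
  toFun := M.act q
  invFun := M.inv.act q
  left_inv := fun w => M.inv_act h q w
  right_inv := fun w => by
    have h2 : ∀ q b, M.inv.τ q (M.inv.τ q b) = b := h
    have := M.inv.inv_act h2 q w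
    rwa [M.inv_inv h] at this

end Mealy

/-- Prepend a finite word to an infinite word. -/
def cat (u : List Bool) (w : ℕ → Bool) : ℕ → Bool :=
  fun n => u.getD n (w (n - u.length))

/-- The (semantic) restriction of a transformation of infinite words to the
subtree indexed by the finite word `u`. -/
def resW (f : (ℕ → Bool) → ℕ → Bool) (u : List Bool) : (ℕ → Bool) → ℕ → Bool :=
  fun w n => f (cat u w) (n + u.length)

/-- The periodic infinite word with period `u`. -/
def per (u : List Bool) : ℕ → Bool := fun n => u.getD (n % u.length) false

/-- Left-shift equivalence of infinite words: they share a common infinite tail. -/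
def seq (u v : ℕ → Bool) : Prop := ∃ k l : ℕ, ∀ n, u (n + k) = v (n + l)

inductive St : Type
  | a | b | c
deriving DecidableEq

instance : Fintype St := ⟨{St.a, St.b, St.c}, fun x => by cases x <;> simp⟩

/-- Automaton 887. -/
def M : Mealy St where
  δ := fun q x => match q, x with
    | .a, false => .b | .a, true => .b
    | .b, false => .c | .b, true => .c
    | .c, false => .b | .c, true => .a
  τ := fun q x => match q with
    | .a => !x
    | .b => x
    | .c => x

theorem M_inv : ∀ q x, M.τ q (M.τ q x) = x := by decide

/-- The automorphism of the binary tree boundary defined by state `a`. -/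
def a : Equiv.Perm (ℕ → Bool) := M.perm M_inv .a

/-- The automorphism of the binary tree boundary defined by state `b`. -/
def b : Equiv.Perm (ℕ → Bool) := M.perm M_inv .b

/-- The automorphism of the binary tree boundary defined by state `c`. -/
def c : Equiv.Perm (ℕ → Bool) := M.perm M_inv .c


section Aux

open Mealy

lemma cat_zero (x : Bool) (w : ℕ → Bool) : cat [x] w 0 = x := rfl

lemma cat_succ (x : Bool) (w : ℕ → Bool) (n : ℕ) : cat [x] w (n+1) = w n := by
  cases n <;> rfl

lemma stateAt_cons (q : St) (x : Bool) (w : ℕ → Bool) (n : ℕ) :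
    M.stateAt q (cat [x] w) (n+1) = M.stateAt (M.δ q x) w n := by
  induction n with
  | zero => rfl
  | succ n ih =>
    show M.δ (M.stateAt q (cat [x] w) (n+1)) (cat [x] w (n+1))
        = M.δ (M.stateAt (M.δ q x) w n) (w n)
    rw [ih, cat_succ]

lemma act_cons (q : St) (x : Bool) (w : ℕ → Bool) :
    M.act q (cat [x] w) = cat [M.τ q x] (M.act (M.δ q x) w) := by
  funext n
  cases n with
  | zero => rfl
  | succ n =>
    rw [cat_succ]
    show M.τ (M.stateAt q (cat [x] w) (n+1)) (cat [x] w (n+1)) = M.act (M.δ q x) w n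
    rw [stateAt_cons, cat_succ]
    rfl

lemma M_inv_eq : M.inv = M := by
  show Mealy.mk _ _ = Mealy.mk _ _
  congr 1
  funext q x
  cases q <;> cases x <;> rfl

lemma b_b (w : ℕ → Bool) : b (b w) = w := by
  have h := M.inv_act M_inv .b w
  rwa [M_inv_eq] at h

lemma aT (w : ℕ → Bool) : a (cat [true] w) = cat [false] (b w) := act_cons .a true w
lemma aF (w : ℕ → Bool) : a (cat [false] w) = cat [true] (b w) := act_cons .a false w
lemma bT (w : ℕ → Bool) : b (cat [true] w) = cat [true] (c w) := act_cons .b true w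
lemma bF (w : ℕ → Bool) : b (cat [false] w) = cat [false] (c w) := act_cons .b false w
lemma cT (w : ℕ → Bool) : c (cat [true] w) = cat [true] (a w) := act_cons .c true w
lemma cF (w : ℕ → Bool) : c (cat [false] w) = cat [false] (b w) := act_cons .c false w

lemma bc_true (w : ℕ → Bool) : (b * c) (cat [true] w) = cat [true] ((c * a) w) := by
  simp only [Equiv.Perm.mul_apply, cT, bT]

lemma ca_true (w : ℕ → Bool) : (c * a) (cat [true] w) = cat [false] w := by
  simp only [Equiv.Perm.mul_apply, aT, cF, b_b]

lemma ca_false (w : ℕ → Bool) : (c * a) (cat [false] w) = cat [true] ((a * b) w) := by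
  simp only [Equiv.Perm.mul_apply, aF, cT]

lemma ab_true (w : ℕ → Bool) : (a * b) (cat [true] w) = cat [false] ((b * c) w) := by
  simp only [Equiv.Perm.mul_apply, bT, aT]

lemma ab_false (w : ℕ → Bool) : (a * b) (cat [false] w) = cat [true] ((b * c) w) := by
  simp only [Equiv.Perm.mul_apply, bF, aF]

lemma casq_true (w : ℕ → Bool) :
    ((c * a) ^ 2) (cat [true] w) = cat [true] ((a * b) w) := by
  rw [sq, Equiv.Perm.mul_apply, ca_true, ca_false]

lemma absq_true (w : ℕ → Bool) :
    ((a * b) ^ 2) (cat [true] w) = cat [true] (((b * c) ^ 2) w) := by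
  rw [sq, Equiv.Perm.mul_apply, ab_true, ab_false, sq]
  simp only [Equiv.Perm.mul_apply]

lemma cat_true_top : cat [true] (fun _ => true) = (fun _ => true) := by
  funext n
  cases n with
  | zero => rfl
  | succ n => rw [cat_succ]

lemma S1 (n : ℕ) :
    ⇑((b * c) ^ n) (fun _ => true) = cat [true] (⇑((c * a) ^ n) (fun _ => true)) := by
  induction n with
  | zero => simp only [pow_zero, Equiv.Perm.coe_one, id_eq, cat_true_top]
  | succ n ih =>
    rw [pow_succ', pow_succ', Equiv.Perm.mul_apply, ih, bc_true]
    simp only [Equiv.Perm.mul_apply]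

lemma S2 (m : ℕ) :
    ⇑((c * a) ^ (2 * m)) (fun _ => true) = cat [true] (⇑((a * b) ^ m) (fun _ => true)) := by
  induction m with
  | zero => simp only [Nat.mul_zero, pow_zero, Equiv.Perm.coe_one, id_eq, cat_true_top]
  | succ m ih =>
    have h2 : 2 * (m + 1) = 2 + 2 * m := by ring
    rw [h2, pow_add, Equiv.Perm.mul_apply, ih, casq_true, pow_succ']
    simp only [Equiv.Perm.mul_apply]

lemma S3 (l : ℕ) :
    ⇑((a * b) ^ (2 * l)) (fun _ => true) = cat [true] (⇑((b * c) ^ (2 * l)) (fun _ => true)) := by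
  induction l with
  | zero => simp only [Nat.mul_zero, pow_zero, Equiv.Perm.coe_one, id_eq, cat_true_top]
  | succ l ih =>
    have h2 : 2 * (l + 1) = 2 + 2 * l := by ring
    rw [h2, pow_add, pow_add, Equiv.Perm.mul_apply, ih, absq_true, Equiv.Perm.mul_apply]

lemma fca (w : ℕ → Bool) : (c * a) w 0 = !(w 0) := rfl

lemma fab (w : ℕ → Bool) : (a * b) w 0 = !(w 0) := rfl

lemma par_ca (n : ℕ) (w : ℕ → Bool) : ⇑((c * a) ^ n) w 0 = xor n.bodd (w 0) := by
  induction n with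
  | zero => simp [pow_zero]
  | succ n ih =>
    rw [pow_succ', Equiv.Perm.mul_apply, fca, ih, Nat.bodd_succ]
    cases n.bodd <;> cases w 0 <;> rfl

lemma par_ab (n : ℕ) (w : ℕ → Bool) : ⇑((a * b) ^ n) w 0 = xor n.bodd (w 0) := by
  induction n with
  | zero => simp [pow_zero]
  | succ n ih =>
    rw [pow_succ', Equiv.Perm.mul_apply, fab, ih, Nat.bodd_succ]
    cases n.bodd <;> cases w 0 <;> rfl

lemma bodd_odd (k : ℕ) : Nat.bodd (2 * k + 1) = true := by
  induction k with
  | zero => rfl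
  | succ k ih =>
    have h : 2 * (k + 1) + 1 = (2 * k + 1) + 1 + 1 := by ring
    rw [h, Nat.bodd_succ, Nat.bodd_succ, ih]
    rfl

lemma key : ∀ n : ℕ, 1 ≤ n → ⇑((c * a) ^ n) (fun _ => true) ≠ (fun _ => true) := by
  intro n
  induction n using Nat.strong_induction_on with
  | _ n ih =>
    intro hn h
    rcases Nat.even_or_odd n with ⟨k, hk⟩ | ⟨k, hk⟩
    · -- n = 2k, k ≥ 1
      have hk2 : n = 2 * k := by omega
      have hk1 : 1 ≤ k := by omega
      rw [hk2, S2] at h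
      rcases Nat.even_or_odd k with ⟨j, hj⟩ | ⟨j, hj⟩
      · -- k = 2j, j ≥ 1
        have hj2 : k = 2 * j := by omega
        have hj1 : 1 ≤ j := by omega
        rw [hj2, S3, S1] at h
        have h2j : ⇑((c * a) ^ (2 * j)) (fun _ => true) = (fun _ => true) := by
          funext m
          have := congrFun h (m + 3)
          rwa [cat_succ, cat_succ, cat_succ] at this
        exact ih (2 * j) (by omega) (by omega) h2j
      · -- k = 2j + 1
        have := congrFun h 1
        rw [cat_succ, par_ab, hj, bodd_odd] at this
        simp at this
    · -- n = 2k + 1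
      have := congrFun h 0
      rw [par_ca, hk, bodd_odd] at this
      simp at this

end Aux

/-- In the automaton group of automaton 887: `bc(1) = 1` and `(bc)|₁ = ca`, hence
`(bc)ⁿ(1^∞) = 1·(ca)ⁿ(1^∞)` for all `n ≥ 1`; since `(ca)ⁿ(1^∞) ≠ 1^∞` for `n ≥ 1`,
the element `bc` has infinite order. -/
theorem automaton887_bc :
    (∀ w : ℕ → Bool, (b * c) (cat [true] w) = cat [true] ((c * a) w)) ∧
    (∀ n : ℕ, 1 ≤ n → ⇑((b * c) ^ n) (fun _ => true) = cat [true] (⇑((c * a) ^ n) (fun _ => true))) ∧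
    (∀ n : ℕ, 1 ≤ n → ⇑((c * a) ^ n) (fun _ => true) ≠ (fun _ => true)) ∧
    (∀ n : ℕ, 1 ≤ n → (b * c) ^ n ≠ 1) := by

  constructor
  · exact bc_true
  refine ⟨fun n _ => S1 n, fun n hn => key n hn, ?_⟩
  intro n hn h
  have h1 : ⇑((b * c) ^ n) (fun _ => true) = (fun _ => true) := by rw [h]; rfl
  rw [S1] at h1
  have h2 : ⇑((c * a) ^ n) (fun _ => true) = (fun _ => true) := by
    funext m
    have := congrFun h1 (m + 1)
    rwa [cat_succ] at this
  exact key n hn h2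

end Stmt13
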